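/- Under Assumption 1, if additionally I_σ^c = I_σ for all σ ∈ Σ (non-overlapping modeled state sets), then the composed controller C_c is the maximal safety controller for the composed abstraction S_c and safe set X_c^0; that is, every safety controller C' for S_c and X_c^0 satisfies C'(s) ⊆ C_c(s) for all s ∈ X_c. -/
import Mathlib


open Set Function

/-- `ℝⁿ` modeled as `Fin n → ℝ`. -/
abbrev Vec (n : ℕ) : Type := Fin n → ℝ

/-- Projection `π_{I'}` of a dependent tuple onto the components with indices in `I'`. -/
def proj {ι : Type*} (E : ι → Type*) (I' : Set ι) (x : (i : ι) → E i) : (i : I') → E i.1 :=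
  fun i => x i.1

/-- `P` is a finite partition of `A`: finitely many nonempty pairwise disjoint cells covering `A`. -/
def IsFinPartition {α : Type*} (P : Set (Set α)) (A : Set α) : Prop :=
  P.Finite ∧ (∀ s ∈ P, s.Nonempty) ∧ ⋃₀ P = A ∧
    ∀ s ∈ P, ∀ t ∈ P, s ≠ t → Disjoint s t

/-- The family `A : τ → Set α` is a partition of the index type `α`. -/
def IsIndexPartition {τ α : Type*} (A : τ → Set α) : Prop :=
  (⋃ σ, A σ) = Set.univ ∧ Pairwise (Disjoint on A)

/-- The set `𝒫` of cells `s₁ × ⋯ × s_n̄`, `s_i ∈ 𝒫_i`, of the product partition. -/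
def cells {ι : Type*} {E : ι → Type*} (P : (i : ι) → Set (Set (E i))) :
    Set (Set ((i : ι) → E i)) :=
  { s | ∃ f : (i : ι) → Set (E i), (∀ i, f i ∈ P i) ∧ s = Set.pi Set.univ f }

/-- The set `X_σ⁰` of cells `∏_{i ∈ I'} s_i`, `s_i ∈ 𝒫_i`, of the partition restricted to `I'`. -/
def cellsOn {ι : Type*} {E : ι → Type*} (P : (i : ι) → Set (Set (E i))) (I' : Set ι) :
    Set (Set ((i : I') → E i.1)) :=
  { s | ∃ f : (i : ι) → Set (E i), (∀ i, f i ∈ P i) ∧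
        s = Set.pi Set.univ (fun i : I' => f i.1) }

/-- `F(𝒳',𝒰') = ⋃_{x ∈ 𝒳', u ∈ 𝒰'} F(x,u)`. -/
def Fset {X U : Type*} (F : X → U → Set X) (A : Set X) (B : Set U) : Set X :=
  ⋃ x ∈ A, ⋃ u ∈ B, F x u

/-- `Φ_σ(s_σ,u_σ) = F̄(𝒳 ∩ π_{I_σ}⁻¹(s_σ), 𝒰 ∩ π_{J_σ}⁻¹({u_σ}))`. -/
def Phi {ι κ : Type*} (E : ι → Type*) (Fu : κ → Type*)
    (Fbar : Set ((i : ι) → E i) → Set ((j : κ) → Fu j) → Set ((i : ι) → E i))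
    (Xset : Set ((i : ι) → E i)) (Uset : Set ((j : κ) → Fu j))
    (Iσ : Set ι) (Jσ : Set κ)
    (sσ : Set ((i : Iσ) → E i.1)) (uσ : (j : Jσ) → Fu j.1) : Set ((i : ι) → E i) :=
  Fbar (Xset ∩ proj E Iσ ⁻¹' sσ) (Uset ∩ proj Fu Jσ ⁻¹' {uσ})

/-- `Out_σ = π_{I_σ}(ℝⁿ) \ 𝒳_{I_σ}`. -/
def OutOf {ι : Type*} (E : ι → Type*) (Iσ : Set ι) (Xset : Set ((i : ι) → E i)) :
    Set ((i : Iσ) → E i.1) :=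
  proj E Iσ '' Set.univ \ proj E Iσ '' Xset

/-- Transition map `δ_σ` of the symbolic subsystem `S_σ`. -/
def deltaSub {ι κ : Type*} (E : ι → Type*) (Fu : κ → Type*)
    (Fbar : Set ((i : ι) → E i) → Set ((j : κ) → Fu j) → Set ((i : ι) → E i))
    (Xset : Set ((i : ι) → E i)) (Uset : Set ((j : κ) → Fu j))
    (P : (i : ι) → Set (Set (E i))) (V : (j : κ) → Set (Fu j))
    (Iσ Icσ : Set ι) (Jσ : Set κ)
    (sσ : Set ((i : Iσ) → E i.1)) (uσ : (j : Jσ) → Fu j.1) :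
    Set (Set ((i : Iσ) → E i.1)) :=
  { s' | sσ ∈ cellsOn P Iσ ∧ uσ ∈ Set.pi Set.univ (fun j : Jσ => V j.1) ∧
      ((s' ∈ cellsOn P Iσ ∧
          (s' ∩ proj E Iσ '' Phi E Fu Fbar Xset Uset Iσ Jσ sσ uσ).Nonempty) ∨
        (s' = OutOf E Iσ Xset ∧
          (proj E Iσ '' Phi E Fu Fbar Xset Uset Iσ Jσ sσ uσ ∩ proj E Iσ '' Xset = ∅ ∨
            ¬proj E Icσ '' Phi E Fu Fbar Xset Uset Iσ Jσ sσ uσ ⊆ proj E Icσ '' Xset))) }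

/-- Transition map `δ_c` of the composed abstraction `S_c`. -/
def deltaC {ι κ τ : Type*} (E : ι → Type*) (Fu : κ → Type*)
    (Fbar : Set ((i : ι) → E i) → Set ((j : κ) → Fu j) → Set ((i : ι) → E i))
    (Xset : Set ((i : ι) → E i)) (Uset : Set ((j : κ) → Fu j))
    (P : (i : ι) → Set (Set (E i))) (V : (j : κ) → Set (Fu j))
    (Im Ic : τ → Set ι) (Jm : τ → Set κ)
    (s : Set ((i : ι) → E i)) (u : (j : κ) → Fu j) :
    Set (Set ((i : ι) → E i)) :=
  { s' | s ∈ cells P ∧ u ∈ Set.pi Set.univ V ∧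
      ((s' ∈ cells P ∧ ∀ σ : τ,
          proj E (Im σ) '' s' ∈
            deltaSub E Fu Fbar Xset Uset P V (Im σ) (Ic σ) (Jm σ)
              (proj E (Im σ) '' s) (proj Fu (Jm σ) u)) ∨
        (s' = Xsetᶜ ∧ ∃ σ : τ,
          OutOf E (Im σ) Xset ∈
            deltaSub E Fu Fbar Xset Uset P V (Im σ) (Ic σ) (Jm σ)
              (proj E (Im σ) '' s) (proj Fu (Jm σ) u))) }

/-- Safety controller for the transition map `δ` and the safe set `safe`. -/
def IsSafetyController {X U : Type*} (δ : X → U → Set X) (safe : Set X) (C : X → Set U) : Prop :=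
  (∀ x, ∀ u ∈ C x, (δ x u).Nonempty) ∧
  (∀ x, (C x).Nonempty → x ∈ safe) ∧
  (∀ x, ∀ u ∈ C x, ∀ x', x' ∈ δ x u → (C x').Nonempty)

/-- Maximal safety controller. -/
def IsMaximalSafetyController {X U : Type*} (δ : X → U → Set X) (safe : Set X)
    (Cstar : X → Set U) : Prop :=
  IsSafetyController δ safe Cstar ∧
    ∀ C, IsSafetyController δ safe C → ∀ x, C x ⊆ Cstar x

/-- Feedback refinement relation (over a common input type). -/
def IsFeedbackRefinement {Xa Xb U : Type*} (δa : Xa → U → Set Xa) (δb : Xb → U → Set Xb)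
    (H : Xa → Xb) : Prop :=
  ∀ xa : Xa,
    (∀ u, (δb (H xa) u).Nonempty → (δa xa u).Nonempty) ∧
    (∀ u, (δb (H xa) u).Nonempty → H '' δa xa u ⊆ δb (H xa) u)

/-- Concrete transition map of `S = (ℝⁿ, 𝒰, F)` (inputs restricted to `𝒰`). -/
def deltaConc {X U : Type*} (F : X → U → Set X) (Uset : Set U) (x : X) (u : U) : Set X :=
  { x' | u ∈ Uset ∧ x' ∈ F x u }

section Aux

lemma proj_image_pi' {ι : Type*} {E : ι → Type*} (I' : Set ι) (f : (i : ι) → Set (E i))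
    (hf : ∀ i, (f i).Nonempty) :
    proj E I' '' Set.pi Set.univ f = Set.pi Set.univ (fun i : I' => f i.1) := by
  classical
  ext g
  constructor
  · rintro ⟨x, hx, rfl⟩ i _; exact hx i.1 trivial
  · intro hg
    refine ⟨fun i => if h : i ∈ I' then g ⟨i, h⟩ else (hf i).some, fun i _ => ?_, ?_⟩
    · by_cases h : i ∈ I'
      · simpa [h] using hg ⟨i, h⟩ trivial
      · simpa [h] using (hf i).some_mem
    · funext i
      simp [proj, i.2]

noncomputable def pick {τ ι : Type*} (A : τ → Set ι) (hA : (⋃ σ, A σ) = Set.univ) (i : ι) : τ :=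
  (Set.mem_iUnion.1 (by rw [hA]; trivial : i ∈ ⋃ σ, A σ)).choose

lemma pick_mem {τ ι : Type*} (A : τ → Set ι) (hA : (⋃ σ, A σ) = Set.univ) (i : ι) :
    i ∈ A (pick A hA i) :=
  (Set.mem_iUnion.1 (by rw [hA]; trivial : i ∈ ⋃ σ, A σ)).choose_spec

lemma pick_eq {τ ι : Type*} {A : τ → Set ι} (hA : (⋃ σ, A σ) = Set.univ)
    (hd : Pairwise (Disjoint on A)) {σ : τ} {i : ι} (h : i ∈ A σ) : pick A hA i = σ := by
  by_contra hne
  exact Set.disjoint_left.1 (hd hne) (pick_mem A hA i) h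

end Aux

theorem stmt4
    {ι κ τ : Type*} [Finite ι] [Finite κ] [Finite τ]
    (nd : ι → ℕ) (pd : κ → ℕ)
    (𝒳i : (i : ι) → Set (Vec (nd i))) (𝒰j : (j : κ) → Set (Vec (pd j)))
    (F : ((i : ι) → Vec (nd i)) → ((j : κ) → Vec (pd j)) → Set ((i : ι) → Vec (nd i)))
    (Fbar : Set ((i : ι) → Vec (nd i)) → Set ((j : κ) → Vec (pd j)) →
      Set ((i : ι) → Vec (nd i)))
    (P : (i : ι) → Set (Set (Vec (nd i)))) (V : (j : κ) → Set (Vec (pd j)))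
    (Im Ic : τ → Set ι) (Jm : τ → Set κ)
    (hF : ∀ x u, u ∈ Set.pi Set.univ 𝒰j → (F x u).Nonempty)
    (hFbar : ∀ A B, Fset F A B ⊆ Fbar A B)
    (hP : ∀ i, IsFinPartition (P i) (𝒳i i))
    (hV : ∀ j, (V j).Finite ∧ V j ⊆ 𝒰j j)
    (hIc : IsIndexPartition Ic) (hIcne : ∀ σ, (Ic σ).Nonempty) (hIcIm : ∀ σ, Ic σ ⊆ Im σ)
    (hJ : IsIndexPartition Jm) (hJne : ∀ σ, (Jm σ).Nonempty)
    (hnov : ∀ σ, Ic σ = Im σ)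
    (Cstar : (σ : τ) → Set ((i : Im σ) → Vec (nd i.1)) → Set ((j : Jm σ) → Vec (pd j.1)))
    (hCstar : ∀ σ, IsMaximalSafetyController
      (deltaSub (fun i => Vec (nd i)) (fun j => Vec (pd j)) Fbar (Set.pi Set.univ 𝒳i) (Set.pi Set.univ 𝒰j) P V (Im σ) (Ic σ) (Jm σ)) (cellsOn P (Im σ)) (Cstar σ))
    (Cc : Set ((i : ι) → Vec (nd i)) → Set ((j : κ) → Vec (pd j)))
    (hCc : ∀ s ∈ cells P, Cc s =
      {u | u ∈ Set.pi Set.univ V ∧ ∀ σ, proj (fun j => Vec (pd j)) (Jm σ) u ∈ Cstar σ (proj (fun i => Vec (nd i)) (Im σ) '' s)})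
    (hCcOut : ∀ s ∉ cells P, Cc s = ∅) :
    IsMaximalSafetyController (deltaC (fun i => Vec (nd i)) (fun j => Vec (pd j)) Fbar (Set.pi Set.univ 𝒳i) (Set.pi Set.univ 𝒰j) P V Im Ic Jm) (cells P) Cc := by
  
  classical
  have hPne : ∀ i, ∀ t ∈ P i, (t : Set (Vec (nd i))).Nonempty := fun i => (hP i).2.1
  have hPsub : ∀ i, ∀ t ∈ P i, t ⊆ 𝒳i i := by
    intro i t ht
    rw [← (hP i).2.2.1]
    exact Set.subset_sUnion_of_mem ht
  have hIm : IsIndexPartition Im := (funext hnov : Ic = Im) ▸ hIc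
  have cell_ne : ∀ f : (i : ι) → Set (Vec (nd i)), (∀ i, f i ∈ P i) →
      (Set.pi Set.univ f).Nonempty := by
    intro f hf
    exact ⟨fun i => (hPne i _ (hf i)).some, fun i _ => (hPne i _ (hf i)).some_mem⟩
  have proj_cell : ∀ (f : (i : ι) → Set (Vec (nd i))), (∀ i, f i ∈ P i) → ∀ I' : Set ι,
      proj (fun i => Vec (nd i)) I' '' Set.pi Set.univ f
        = Set.pi Set.univ (fun i : I' => f i.1) :=
    fun f hf I' => proj_image_pi' I' f (fun i => hPne i _ (hf i))
  have compl_not_cell : (Set.pi Set.univ 𝒳i)ᶜ ∉ cells P := by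
    rintro ⟨f, hf, hfe⟩
    obtain ⟨x, hx⟩ := cell_ne f hf
    have hxX : x ∈ Set.pi Set.univ 𝒳i := fun i _ => hPsub i _ (hf i) (hx i trivial)
    have hxc : x ∈ (Set.pi Set.univ 𝒳i)ᶜ := by rw [hfe]; exact hx
    exact hxc hxX
  have out_not_cell : ∀ I' : Set ι,
      OutOf (fun i => Vec (nd i)) I' (Set.pi Set.univ 𝒳i) ∉ cellsOn P I' := by
    rintro I' ⟨f, hf, hfe⟩
    obtain ⟨x, hx⟩ := cell_ne f hf
    have hxX : x ∈ Set.pi Set.univ 𝒳i := fun i _ => hPsub i _ (hf i) (hx i trivial)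
    have hmem : proj (fun i => Vec (nd i)) I' x
        ∈ Set.pi Set.univ (fun i : I' => f i.1) := fun i _ => hx i.1 trivial
    rw [← hfe] at hmem
    exact hmem.2 ⟨x, hxX, rfl⟩
  have cstar_inputV : ∀ σ xσ vσ, vσ ∈ Cstar σ xσ →
      vσ ∈ Set.pi Set.univ (fun j : Jm σ => V j.1) := by
    intro σ xσ vσ hv
    obtain ⟨t, ht⟩ := (hCstar σ).1.1 xσ vσ hv
    simp only [deltaSub, Set.mem_setOf_eq] at ht
    exact ht.2.1
  have hCcdom : ∀ s, (Cc s).Nonempty → s ∈ cells P := by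
    rintro s ⟨u, hu⟩
    by_contra h
    rw [hCcOut s h] at hu
    exact hu
  -- Part A(i): enabledness
  have hA1 : ∀ s, ∀ u ∈ Cc s,
      (deltaC (fun i => Vec (nd i)) (fun j => Vec (pd j)) Fbar (Set.pi Set.univ 𝒳i)
        (Set.pi Set.univ 𝒰j) P V Im Ic Jm s u).Nonempty := by
    intro s u hu
    have hs : s ∈ cells P := hCcdom s ⟨u, hu⟩
    rw [hCc s hs] at hu
    obtain ⟨huV, hust⟩ := hu
    have hsucc : ∀ σ, ∃ t, t ∈ deltaSub (fun i => Vec (nd i)) (fun j => Vec (pd j)) Fbar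
        (Set.pi Set.univ 𝒳i) (Set.pi Set.univ 𝒰j) P V (Im σ) (Ic σ) (Jm σ)
        (proj (fun i => Vec (nd i)) (Im σ) '' s) (proj (fun j => Vec (pd j)) (Jm σ) u)
        ∧ t ∈ cellsOn P (Im σ) := by
      intro σ
      obtain ⟨t, ht⟩ := (hCstar σ).1.1 _ _ (hust σ)
      exact ⟨t, ht, (hCstar σ).1.2.1 t ((hCstar σ).1.2.2 _ _ (hust σ) t ht)⟩
    choose tc htd htc using hsucc
    choose fc hfc hfeq using htc
    refine ⟨Set.pi Set.univ (fun i => fc (pick Im hIm.1 i) i), hs, huV,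
      Or.inl ⟨⟨_, fun i => hfc _ i, rfl⟩, ?_⟩⟩
    intro σ
    have hkey : proj (fun i => Vec (nd i)) (Im σ) ''
        Set.pi Set.univ (fun i => fc (pick Im hIm.1 i) i) = tc σ := by
      rw [proj_cell _ (fun i => hfc _ i) (Im σ), hfeq σ]
      refine congrArg (Set.pi Set.univ) (funext fun i => ?_)
      rw [pick_eq hIm.1 hIm.2 i.2]
    rw [hkey]
    exact htd σ
  -- Part A(iii): invariance
  have hA3 : ∀ s, ∀ u ∈ Cc s, ∀ s', s' ∈ deltaC (fun i => Vec (nd i)) (fun j => Vec (pd j))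
      Fbar (Set.pi Set.univ 𝒳i) (Set.pi Set.univ 𝒰j) P V Im Ic Jm s u →
      (Cc s').Nonempty := by
    intro s u hu s' hs'
    have hs : s ∈ cells P := hCcdom s ⟨u, hu⟩
    rw [hCc s hs] at hu
    obtain ⟨huV, hust⟩ := hu
    simp only [deltaC, Set.mem_setOf_eq] at hs'
    rcases hs'.2.2 with ⟨hs'c, hall⟩ | ⟨-, σ, hout⟩
    · have hv : ∀ σ, (Cstar σ (proj (fun i => Vec (nd i)) (Im σ) '' s')).Nonempty :=
        fun σ => (hCstar σ).1.2.2 _ _ (hust σ) _ (hall σ)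
      choose v hvmem using hv
      refine ⟨fun j => v (pick Jm hJ.1 j) ⟨j, pick_mem Jm hJ.1 j⟩, ?_⟩
      rw [hCc s' hs'c]
      refine ⟨fun j _ => cstar_inputV _ _ _ (hvmem (pick Jm hJ.1 j))
        ⟨j, pick_mem Jm hJ.1 j⟩ trivial, ?_⟩
      intro σ
      have hkey : proj (fun j => Vec (pd j)) (Jm σ)
          (fun j => v (pick Jm hJ.1 j) ⟨j, pick_mem Jm hJ.1 j⟩) = v σ := by
        funext j
        obtain ⟨j, hj⟩ := j
        have hp : pick Jm hJ.1 j = σ := pick_eq hJ.1 hJ.2 hj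
        subst hp
        rfl
      rw [hkey]
      exact hvmem σ
    · exfalso
      exact out_not_cell (Im σ)
        ((hCstar σ).1.2.1 _ ((hCstar σ).1.2.2 _ _ (hust σ) _ hout))
  refine ⟨⟨hA1, hCcdom, hA3⟩, ?_⟩
  -- Maximality
  intro C' hC' s u hu
  have succ_ok : ∀ t w, w ∈ C' t → ∀ t'', t'' ∈ deltaC (fun i => Vec (nd i))
      (fun j => Vec (pd j)) Fbar (Set.pi Set.univ 𝒳i) (Set.pi Set.univ 𝒰j) P V Im Ic Jm t w →
      (w ∈ Set.pi Set.univ V ∧ t'' ∈ cells P ∧ ∀ σ,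
        proj (fun i => Vec (nd i)) (Im σ) '' t'' ∈ deltaSub (fun i => Vec (nd i))
          (fun j => Vec (pd j)) Fbar (Set.pi Set.univ 𝒳i) (Set.pi Set.univ 𝒰j) P V
          (Im σ) (Ic σ) (Jm σ) (proj (fun i => Vec (nd i)) (Im σ) '' t)
          (proj (fun j => Vec (pd j)) (Jm σ) w)) := by
    intro t w hw t'' ht''
    have hne : (C' t'').Nonempty := hC'.2.2 t w hw t'' ht''
    simp only [deltaC, Set.mem_setOf_eq] at ht''
    rcases ht''.2.2 with ⟨h1, h2⟩ | ⟨h1, -⟩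
    · exact ⟨ht''.2.1, h1, h2⟩
    · exact absurd (hC'.2.1 t'' hne) (h1 ▸ compl_not_cell)
  have hs : s ∈ cells P := hC'.2.1 s ⟨u, hu⟩
  obtain ⟨s0, hs0⟩ := hC'.1 s u hu
  have huV : u ∈ Set.pi Set.univ V := (succ_ok s u hu s0 hs0).1
  rw [hCc s hs]
  refine ⟨huV, ?_⟩
  intro σ
  have hDsc : IsSafetyController (deltaSub (fun i => Vec (nd i)) (fun j => Vec (pd j)) Fbar
      (Set.pi Set.univ 𝒳i) (Set.pi Set.univ 𝒰j) P V (Im σ) (Ic σ) (Jm σ))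
      (cellsOn P (Im σ))
      (fun xσ => {v | ∃ t w, w ∈ C' t ∧ proj (fun i => Vec (nd i)) (Im σ) '' t = xσ ∧
        v = proj (fun j => Vec (pd j)) (Jm σ) w}) := by
    refine ⟨?_, ?_, ?_⟩
    · rintro xσ v ⟨t, w, hw, rfl, rfl⟩
      obtain ⟨t'', ht''⟩ := hC'.1 t w hw
      exact ⟨_, (succ_ok t w hw t'' ht'').2.2 σ⟩
    · rintro xσ ⟨v, t, w, hw, heq, -⟩
      obtain ⟨f, hf, rfl⟩ := hC'.2.1 t ⟨w, hw⟩
      rw [← heq, proj_cell f hf]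
      exact ⟨f, hf, rfl⟩
    · rintro xσ v ⟨t, w, hw, rfl, rfl⟩ x' hx'
      obtain ⟨t'', ht''⟩ := hC'.1 t w hw
      obtain ⟨hwV, ht''c, ht''all⟩ := succ_ok t w hw t'' ht''
      have hx'2 := hx'
      simp only [deltaSub, Set.mem_setOf_eq] at hx'2
      rcases hx'2.2.2 with ⟨⟨h, hh, hxe⟩, -⟩ | ⟨hxo, -⟩
      · obtain ⟨g, hg, hte⟩ := ht''c
        have hf'P : ∀ i, (if i ∈ Im σ then h i else g i) ∈ P i := by
          intro i
          by_cases hi : i ∈ Im σ <;> simp [hi, hh i, hg i]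
        have key1 : proj (fun i => Vec (nd i)) (Im σ) ''
            Set.pi Set.univ (fun i => if i ∈ Im σ then h i else g i) = x' := by
          rw [proj_cell _ hf'P, hxe]
          refine congrArg (Set.pi Set.univ) (funext fun i => ?_)
          simp [i.2]
        have key2 : ∀ σ', σ' ≠ σ → proj (fun i => Vec (nd i)) (Im σ') ''
            Set.pi Set.univ (fun i => if i ∈ Im σ then h i else g i)
            = proj (fun i => Vec (nd i)) (Im σ') '' t'' := by
          intro σ' hne
          rw [proj_cell _ hf'P, hte, proj_cell g hg]
          refine congrArg (Set.pi Set.univ) (funext fun i => ?_)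
          have hni : i.1 ∉ Im σ := fun hmem => Set.disjoint_left.1 (hIm.2 hne) i.2 hmem
          simp [hni]
        have hmem : Set.pi Set.univ (fun i => if i ∈ Im σ then h i else g i)
            ∈ deltaC (fun i => Vec (nd i)) (fun j => Vec (pd j)) Fbar (Set.pi Set.univ 𝒳i)
              (Set.pi Set.univ 𝒰j) P V Im Ic Jm t w := by
          refine ⟨hC'.2.1 t ⟨w, hw⟩, hwV, Or.inl ⟨⟨_, hf'P, rfl⟩, ?_⟩⟩
          intro σ'
          by_cases hne : σ' = σ
          · subst hne
            rw [key1]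
            exact hx'
          · rw [key2 σ' hne]
            exact ht''all σ'
        obtain ⟨w', hw'⟩ := hC'.2.2 t w hw _ hmem
        exact ⟨proj (fun j => Vec (pd j)) (Jm σ) w', _, w', hw', key1, rfl⟩
      · exfalso
        have hmem : (Set.pi Set.univ 𝒳i)ᶜ ∈ deltaC (fun i => Vec (nd i))
            (fun j => Vec (pd j)) Fbar (Set.pi Set.univ 𝒳i) (Set.pi Set.univ 𝒰j)
            P V Im Ic Jm t w :=
          ⟨hC'.2.1 t ⟨w, hw⟩, hwV, Or.inr ⟨rfl, σ, by rw [← hxo]; exact hx'⟩⟩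
        exact compl_not_cell (hC'.2.1 _ (hC'.2.2 t w hw _ hmem))
  exact (hCstar σ).2 _ hDsc _ ⟨s, u, hu, rfl, rfl⟩
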